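/- Let A ∈ ℍ^{m×n} be a quaternion matrix and let Y ∈ ℍ^{m×n} be a {1}-inverse of A*AA* (i.e. (A*AA*)·Y·(A*AA*) = A*AA*). Then the matrix X = A*·Y·A* ∈ ℍ^{n×m} satisfies the four Penrose equations: AXA = A, XAX = X, (AX)* = AX, and (XA)* = XA; in particular, X is the Moore–Penrose inverse of A. -/

import Mathlib

open Matrix

noncomputable section

/-- The real quaternion division ring ℍ. -/
abbrev Quat : Type := Quaternion ℝ

/-- Left range `R_l(A) = {xA : x ∈ ℍ^{1×m}} ⊆ ℍ^{1×n}`. -/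
def leftRange {m n : ℕ} (A : Matrix (Fin m) (Fin n) Quat) : Set (Fin n → Quat) :=
  {y | ∃ x : Fin m → Quat, y = Matrix.vecMul x A}

/-- Left null space `N_l(A) = {x ∈ ℍ^{1×m} : xA = 0}`. -/
def leftNull {m n : ℕ} (A : Matrix (Fin m) (Fin n) Quat) : Set (Fin m → Quat) :=
  {x | Matrix.vecMul x A = 0}

/-- Right range `R_r(A) = {Ax : x ∈ ℍ^{n×1}} ⊆ ℍ^{m×1}`. -/
def rightRange {m n : ℕ} (A : Matrix (Fin m) (Fin n) Quat) : Set (Fin m → Quat) :=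
  {y | ∃ x : Fin n → Quat, y = Matrix.mulVec A x}

/-- Right null space `N_r(A) = {x ∈ ℍ^{n×1} : Ax = 0}`. -/
def rightNull {m n : ℕ} (A : Matrix (Fin m) (Fin n) Quat) : Set (Fin n → Quat) :=
  {x | Matrix.mulVec A x = 0}

/-- The rank of a quaternion matrix: the dimension of its left range
(the left ℍ-span of its rows) as a left ℍ-vector space. -/
def qRank {m n : ℕ} (A : Matrix (Fin m) (Fin n) Quat) : ℕ :=
  Module.finrank Quat (Submodule.span Quat (Set.range (fun i : Fin m => A i)))

private lemma key {p q : ℕ} (M : Matrix (Fin p) (Fin q) Quat) (h : Mᴴ * M = 0) : M = 0 := by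
  apply Matrix.ext; intro i j
  have hd : (Mᴴ * M) j j = 0 := by rw [h]; rfl
  rw [Matrix.mul_apply] at hd
  simp only [Matrix.conjTranspose_apply] at hd
  have hd' : ∑ k, ((Quaternion.normSq (M k j) : ℝ) : Quat) = 0 := by
    simpa [Quaternion.star_mul_self] using hd
  have hsum : ∑ k, Quaternion.normSq (M k j) = 0 := by
    apply Quaternion.coe_injective
    have hc : ∀ (s : Finset (Fin p)), ((∑ k ∈ s, Quaternion.normSq (M k j) : ℝ) : Quat)
        = ∑ k ∈ s, ((Quaternion.normSq (M k j) : ℝ) : Quat) := by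
      intro s
      induction s using Finset.induction with
      | empty => simp [Quaternion.coe_zero]
      | insert _ _ hnot ih => rw [Finset.sum_insert hnot, Finset.sum_insert hnot,
          Quaternion.coe_add, ih]
    rw [Quaternion.coe_zero, hc]
    exact hd'
  have : Quaternion.normSq (M i j) = 0 := by
    have hnn : ∀ k ∈ Finset.univ, (0:ℝ) ≤ Quaternion.normSq (M k j) :=
      fun k _ => Quaternion.normSq_nonneg
    exact (Finset.sum_eq_zero_iff_of_nonneg hnn).1 hsum i (Finset.mem_univ i)
  simpa using Quaternion.normSq_eq_zero.1 this

lemma cancel_left {a b c : ℕ} (A : Matrix (Fin a) (Fin b) Quat)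
    (B : Matrix (Fin b) (Fin c) Quat) (h : Aᴴ * (A * B) = 0) : A * B = 0 := by
  apply key
  have : (A * B)ᴴ * (A * B) = Bᴴ * (Aᴴ * (A * B)) := by
    simp only [Matrix.conjTranspose_mul, Matrix.mul_assoc]
  rw [this, h, Matrix.mul_zero]

lemma cancel_right {a b c : ℕ} (A : Matrix (Fin a) (Fin b) Quat)
    (B : Matrix (Fin c) (Fin a) Quat) (h : B * A * Aᴴ = 0) : B * A = 0 := by
  have h2 : (B * A)ᴴ = 0 := by
    rw [Matrix.conjTranspose_mul]
    apply cancel_left Aᴴ Bᴴ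
    have : (Aᴴ)ᴴ * (Aᴴ * Bᴴ) = (B * A * Aᴴ)ᴴ := by
      simp only [Matrix.conjTranspose_mul, Matrix.conjTranspose_conjTranspose,
        Matrix.mul_assoc]
    rw [this, h, Matrix.conjTranspose_zero]
  calc B * A = (B * A)ᴴᴴ := (Matrix.conjTranspose_conjTranspose _).symm
    _ = 0 := by rw [h2, Matrix.conjTranspose_zero]

/-- Theorem 3.7: `A* ((A* A A*)⁽¹⁾) A*` satisfies the four Penrose equations,
hence is the Moore–Penrose inverse of `A`. -/
theorem stmt13 {m n : ℕ} (A : Matrix (Fin m) (Fin n) Quat)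
    (Y : Matrix (Fin m) (Fin n) Quat)
    (hY : (Aᴴ * A * Aᴴ) * Y * (Aᴴ * A * Aᴴ) = Aᴴ * A * Aᴴ)
    (X : Matrix (Fin n) (Fin m) Quat) (hX : X = Aᴴ * Y * Aᴴ) :
    A * X * A = A ∧ X * A * X = X ∧ (A * X)ᴴ = A * X ∧ (X * A)ᴴ = X * A := by
  subst hX
  -- Eq1 : AᴴAAᴴYAᴴA = AᴴA
  have eq1 : Aᴴ * A * Aᴴ * Y * Aᴴ * A = Aᴴ * A := by
    rw [← sub_eq_zero]
    have h0 : (Aᴴ * A * Aᴴ * Y * Aᴴ - Aᴴ) * A * Aᴴ = 0 := by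
      simp only [Matrix.sub_mul, sub_eq_zero, ← Matrix.mul_assoc]
      simpa only [← Matrix.mul_assoc] using hY
    have := cancel_right A _ h0
    simpa only [Matrix.sub_mul] using this
  -- Eq4 : AᴴAAᴴYAᴴ = Aᴴ
  have eq4 : Aᴴ * A * Aᴴ * Y * Aᴴ = Aᴴ := by
    rw [← sub_eq_zero]
    have h0 : (Aᴴ * A * Aᴴ * Y - 1) * Aᴴ * (Aᴴ)ᴴ = 0 := by
      rw [Matrix.conjTranspose_conjTranspose]
      simp only [Matrix.sub_mul, Matrix.one_mul, sub_eq_zero, ← Matrix.mul_assoc]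
      simpa only [← Matrix.mul_assoc] using eq1
    have := cancel_right Aᴴ _ h0
    simpa only [Matrix.sub_mul, Matrix.one_mul] using this
  -- star of hY
  have hYs : A * Aᴴ * A * Yᴴ * A * Aᴴ * A = A * Aᴴ * A := by
    have := congrArg conjTranspose hY
    simpa only [Matrix.conjTranspose_mul, Matrix.conjTranspose_conjTranspose,
      ← Matrix.mul_assoc] using this
  -- Eq3a : AᴴAYᴴAAᴴA = AᴴA
  have eq3a : Aᴴ * A * Yᴴ * A * Aᴴ * A = Aᴴ * A := by
    rw [← sub_eq_zero]
    have h0 : (Aᴴ)ᴴ * (Aᴴ * (A * Yᴴ * A * Aᴴ * A - A)) = 0 := by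
      rw [Matrix.conjTranspose_conjTranspose]
      simp only [Matrix.mul_sub, sub_eq_zero, ← Matrix.mul_assoc]
      simpa only [← Matrix.mul_assoc] using hYs
    have := cancel_left Aᴴ _ h0
    simpa only [Matrix.mul_sub, sub_eq_zero, ← Matrix.mul_assoc] using this
  -- Eq3 : AᴴAYᴴAAᴴ = Aᴴ
  have eq3 : Aᴴ * A * Yᴴ * A * Aᴴ = Aᴴ := by
    rw [← sub_eq_zero]
    have h0 : (Aᴴ * A * Yᴴ * A - 1) * Aᴴ * (Aᴴ)ᴴ = 0 := by
      rw [Matrix.conjTranspose_conjTranspose]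
      simp only [Matrix.sub_mul, Matrix.one_mul, sub_eq_zero, ← Matrix.mul_assoc]
      simpa only [← Matrix.mul_assoc] using eq3a
    have := cancel_right Aᴴ _ h0
    simpa only [Matrix.sub_mul, Matrix.one_mul] using this
  -- Eq2 : AAᴴYAᴴAAᴴ = AAᴴ
  have eq2 : A * Aᴴ * Y * Aᴴ * A * Aᴴ = A * Aᴴ := by
    rw [← sub_eq_zero]
    have h0 : Aᴴ * (A * (Aᴴ * Y * Aᴴ * A * Aᴴ - Aᴴ)) = 0 := by
      simp only [Matrix.mul_sub, sub_eq_zero, ← Matrix.mul_assoc]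
      simpa only [← Matrix.mul_assoc] using hY
    have := cancel_left A _ h0
    simpa only [Matrix.mul_sub, sub_eq_zero, ← Matrix.mul_assoc] using this
  -- Eq5 : AᴴYAᴴAAᴴ = Aᴴ
  have eq5 : Aᴴ * Y * Aᴴ * A * Aᴴ = Aᴴ := by
    rw [← sub_eq_zero]
    have h0 : (Aᴴ)ᴴ * (Aᴴ * (Y * Aᴴ * A * Aᴴ - 1)) = 0 := by
      rw [Matrix.conjTranspose_conjTranspose]
      simp only [Matrix.mul_sub, Matrix.mul_one, sub_eq_zero, ← Matrix.mul_assoc]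
      simpa only [← Matrix.mul_assoc] using eq2
    have := cancel_left Aᴴ _ h0
    simpa only [Matrix.mul_sub, Matrix.mul_one, sub_eq_zero, ← Matrix.mul_assoc] using this
  refine ⟨?_, ?_, ?_, ?_⟩
  · -- AXA = A : star of eq3
    have := congrArg conjTranspose eq3
    simpa only [Matrix.conjTranspose_mul, Matrix.conjTranspose_conjTranspose,
      ← Matrix.mul_assoc] using this
  · -- XAX = X
    simp only [← Matrix.mul_assoc]
    rw [eq5]
  · -- (AX)ᴴ = AX
    have h0 : Aᴴ * (A * (Yᴴ * A * Aᴴ - Aᴴ * Y * Aᴴ)) = 0 := by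
      simp only [Matrix.mul_sub, sub_eq_zero, ← Matrix.mul_assoc]
      rw [eq3, eq4]
    have := cancel_left A _ h0
    simp only [Matrix.mul_sub, sub_eq_zero, ← Matrix.mul_assoc] at this
    simpa only [Matrix.conjTranspose_mul, Matrix.conjTranspose_conjTranspose,
      ← Matrix.mul_assoc] using this
  · -- (XA)ᴴ = XA
    have h0 : (Aᴴ * A * Yᴴ - Aᴴ * Y * Aᴴ) * A * Aᴴ = 0 := by
      simp only [Matrix.sub_mul, sub_eq_zero, ← Matrix.mul_assoc]
      rw [eq3, eq5]
    have := cancel_right A _ h0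
    simp only [Matrix.sub_mul, sub_eq_zero, ← Matrix.mul_assoc] at this
    simpa only [Matrix.conjTranspose_mul, Matrix.conjTranspose_conjTranspose,
      ← Matrix.mul_assoc] using this
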